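/- The Cantor space 𝐂 is homeomorphic to the subspace L₂ ∖ T₂ of 𝐋₂ consisting of the infinite binary sequences, with the topology induced from the Scott topology on L₂. -/

import Mathlib

open Set

/-- Finite and infinite `σ`-valued sequences, encoded as functions `ℕ → Option σ` whose
domain of definition is an initial segment of `ℕ`. -/
structure Lgen (σ : Type*) where
  toFun : ℕ → Option σ
  init : ∀ n, toFun (n + 1) ≠ none → toFun n ≠ none

/-- The initial-segment (prefix) partial order on `Lgen σ`. -/
instance Lgen.instPartialOrder {σ : Type*} : PartialOrder (Lgen σ) where
  le f g := ∀ (n : ℕ) (s : σ), f.toFun n = some s → g.toFun n = some s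
  le_refl f n s h := h
  le_trans f g h hfg hgh n s hs := hgh n s (hfg n s hs)
  le_antisymm f g hfg hgf := by
    obtain ⟨ff, hf⟩ := f
    obtain ⟨gf, hg⟩ := g
    have hfun : ff = gf := by
      funext n
      cases hfn : ff n with
      | some s =>
        have h2 : gf n = some s := hfg n s hfn
        exact h2.symm
      | none =>
        cases hgn : gf n with
        | some s =>
          have h2 : ff n = some s := hgf n s hgn
          rw [hfn] at h2
          exact absurd h2 (by simp)
        | none => rfl
    subst hfun
    rfl

/-- The finite sequence given by a list, as an element of `Lgen σ`. -/
def Lgen.ofList {σ : Type*} (l : List σ) : Lgen σ where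
  toFun n := l[n]?
  init n h := by
    simp only [ne_eq, List.getElem?_eq_none_iff, not_le] at h ⊢
    omega

/-- The infinite binary tree with limits `L₂`: finite and infinite binary sequences with the
initial-segment order. -/
abbrev L2 : Type := Lgen Bool

/-- The Scott topology of a preorder: opens are the upper sets `U` such that every nonempty
directed set whose least upper bound lies in `U` meets `U`. -/
def scottTopology (α : Type*) [Preorder α] : TopologicalSpace α where
  IsOpen U := IsUpperSet U ∧ ∀ d : Set α, d.Nonempty → DirectedOn (· ≤ ·) d →
      ∀ x, IsLUB d x → x ∈ U → (d ∩ U).Nonempty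
  isOpen_univ := ⟨isUpperSet_univ, fun d hd _ _ _ _ => hd.imp fun y hy => ⟨hy, mem_univ y⟩⟩
  isOpen_inter := by
    rintro U V ⟨hU1, hU2⟩ ⟨hV1, hV2⟩
    refine ⟨hU1.inter hV1, fun d hdne hdir x hlub hx => ?_⟩
    obtain ⟨a, ha, haU⟩ := hU2 d hdne hdir x hlub hx.1
    obtain ⟨b, hb, hbV⟩ := hV2 d hdne hdir x hlub hx.2
    obtain ⟨c, hc, hac, hbc⟩ := hdir a ha b hb
    exact ⟨c, hc, hU1 hac haU, hV1 hbc hbV⟩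
  isOpen_sUnion := by
    intro S hS
    refine ⟨fun a b hab ha => ?_, fun d hdne hdir x hlub hx => ?_⟩
    · obtain ⟨U, hU, haU⟩ := ha
      exact ⟨U, hU, (hS U hU).1 hab haU⟩
    · obtain ⟨U, hU, hxU⟩ := hx
      obtain ⟨a, ha, haU⟩ := (hS U hU).2 d hdne hdir x hlub hxU
      exact ⟨a, ha, U, hU, haU⟩

/-- `𝐋₂`: the infinite binary tree with limits carries the Scott topology. -/
instance : TopologicalSpace L2 := scottTopology L2

lemma Lgen.ext' {x y : L2} (h : x.toFun = y.toFun) : x = y := by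
  cases x; cases y; simpa using h

lemma Lgen.none_mono (x : L2) {n m : ℕ} (h : x.toFun n = none) (hnm : n ≤ m) :
    x.toFun m = none := by
  induction hnm with
  | refl => exact h
  | step _ ih =>
    by_contra h2
    exact x.init _ h2 ih

/-- The embedding of infinite sequences. -/
def embed (f : ℕ → Bool) : L2 := ⟨fun n => some (f n), fun n h => by simp⟩

lemma embed_mem (f : ℕ → Bool) :
    embed f ∈ {x : L2 | x ∉ Set.range (Lgen.ofList : List Bool → L2)} := by
  rintro ⟨l, hl⟩
  have := congrArg (fun x : L2 => x.toFun l.length) hl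
  simp [Lgen.ofList, embed] at this

lemma mem_infinite_iff {x : L2} :
    x ∈ {x : L2 | x ∉ Set.range (Lgen.ofList : List Bool → L2)} ↔
      ∀ n, x.toFun n ≠ none := by
  constructor
  · intro hx n hn
    apply hx
    by_cases hN : ∃ N, x.toFun N = none
    · classical
      let N := Nat.find hN
      refine ⟨List.ofFn (fun i : Fin N => (x.toFun i).getD false), ?_⟩
      apply Lgen.ext'
      funext m
      by_cases hm : m < N
      · have hsome : x.toFun m ≠ none := Nat.find_min hN hm
        simp only [Lgen.ofList]
        rw [List.getElem?_ofFn]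
        cases hx : x.toFun m with
        | none => exact absurd hx hsome
        | some b => simp [List.ofFnNthVal, hm, hx]
      · have hxm : x.toFun m = none := Lgen.none_mono x (Nat.find_spec hN) (not_lt.mp hm)
        simp only [Lgen.ofList]
        rw [hxm, List.getElem?_eq_none]
        simpa using not_lt.mp hm
    · exact absurd ⟨n, hn⟩ hN
  · intro h hx
    obtain ⟨l, hl⟩ := hx
    have := congrArg (fun x : L2 => x.toFun l.length) hl
    simp [Lgen.ofList] at this
    exact h l.length this.symm

/-- Finite prefixes of an infinite sequence. -/
def pre (f : ℕ → Bool) (n : ℕ) : L2 := Lgen.ofList (List.ofFn (fun i : Fin n => f i))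

lemma pre_toFun (f : ℕ → Bool) (n m : ℕ) :
    (pre f n).toFun m = if m < n then some (f m) else none := by
  simp only [pre, Lgen.ofList]
  rw [List.getElem?_ofFn]
  by_cases hm : m < n <;> simp [List.ofFnNthVal, hm]

lemma pre_le_embed (f : ℕ → Bool) (n : ℕ) : pre f n ≤ embed f := by
  intro m s hs
  rw [pre_toFun] at hs
  split at hs
  · simpa [embed] using hs
  · simp at hs

lemma isLUB_pre (f : ℕ → Bool) : IsLUB (Set.range (pre f)) (embed f) := by
  constructor
  · rintro _ ⟨n, rfl⟩
    exact pre_le_embed f n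
  · intro z hz n s hs
    have h1 : (pre f (n + 1)).toFun n = some (f n) := by
      rw [pre_toFun]; simp
    have := hz ⟨n + 1, rfl⟩ n (f n) h1
    simp only [embed] at hs
    rw [← Option.some_inj.mp hs]
    exact this

lemma scott_basic_open (k : ℕ) (b : Bool) :
    IsOpen {x : L2 | x.toFun k = some b} := by
  constructor
  · intro x y hxy hx
    exact hxy k b hx
  · intro d hdne hdir x hlub hx
    by_contra hempty
    rw [Set.not_nonempty_iff_eq_empty] at hempty
    -- every element of d is none at k
    have hdk : ∀ y ∈ d, y.toFun k = none := by
      intro y hy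
      cases hyk : y.toFun k with
      | none => rfl
      | some b' =>
        have := hlub.1 hy k b' hyk
        rw [hx] at this
        have hb : b' = b := by simpa using this.symm
        subst hb
        exact absurd (Set.eq_empty_iff_forall_notMem.mp hempty y) (by simp [hy, hyk])
    -- z = truncation of x below k
    set z : L2 := Lgen.ofList (List.ofFn (fun i : Fin k => (x.toFun i).getD false)) with hz
    have hztoFun : ∀ m, z.toFun m =
        if m < k then some ((x.toFun m).getD false) else none := by
      intro m
      simp only [hz, Lgen.ofList]
      rw [List.getElem?_ofFn]
      by_cases hm : m < k <;> simp [List.ofFnNthVal, hm]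
    have hzub : z ∈ upperBounds d := by
      intro y hy m s hs
      have hmk : m < k := by
        by_contra hmk
        rw [Lgen.none_mono y (hdk y hy) (not_lt.mp hmk)] at hs
        exact absurd hs (by simp)
      have hxm : x.toFun m = some s := hlub.1 hy m s hs
      rw [hztoFun m, if_pos hmk, hxm]
      rfl
    have hxz : x ≤ z := hlub.2 hzub
    have := hxz k b hx
    rw [hztoFun k, if_neg (lt_irrefl k)] at this
    exact absurd this (by simp)

/-- The Cantor space `ℕ → Bool` (with the product topology) is homeomorphic
to the subspace `L₂ ∖ T₂` of `𝐋₂` consisting of the infinite binary sequences, with the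
topology induced from the Scott topology on `L₂`. -/
theorem statement9 :
    Nonempty ((ℕ → Bool) ≃ₜ
      {x : L2 | x ∉ Set.range (Lgen.ofList : List Bool → L2)}) := by
  classical
  let e : (ℕ → Bool) ≃ {x : L2 | x ∉ Set.range (Lgen.ofList : List Bool → L2)} :=
  { toFun := fun f => ⟨embed f, embed_mem f⟩
    invFun := fun x n => (x.1.toFun n).getD false
    left_inv := fun f => by funext n; simp [embed]
    right_inv := fun x => by
      apply Subtype.ext
      apply Lgen.ext'
      funext n
      have hn := mem_infinite_iff.mp x.2 n
      cases hx : x.1.toFun n with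
      | none => exact absurd hx hn
      | some b => simp [embed, hx] }
  have hpre_le : ∀ (f : ℕ → Bool) (a b : ℕ), a ≤ b → pre f a ≤ pre f b := by
    intro f a b hab m s hs
    rw [pre_toFun] at hs ⊢
    split at hs
    · rw [if_pos (by omega)]; exact hs
    · exact absurd hs (by simp)
  have hcont : Continuous e := by
    rw [continuous_def]
    intro V hV
    obtain ⟨U, hU, rfl⟩ := isOpen_induced_iff.mp hV
    have hpre : e ⁻¹' (Subtype.val ⁻¹' U) = embed ⁻¹' U := rfl
    rw [hpre]
    rw [isOpen_iff_forall_mem_open]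
    intro f hf
    obtain ⟨hup, hscott⟩ := hU
    have hdir : DirectedOn (· ≤ ·) (Set.range (pre f)) := by
      rintro _ ⟨a, rfl⟩ _ ⟨b, rfl⟩
      exact ⟨pre f (max a b), ⟨max a b, rfl⟩, hpre_le f a _ (le_max_left a b),
        hpre_le f b _ (le_max_right a b)⟩
    obtain ⟨_, ⟨n, rfl⟩, hpU⟩ := hscott (Set.range (pre f)) ⟨pre f 0, 0, rfl⟩ hdir
      (embed f) (isLUB_pre f) hf
    refine ⟨Set.pi ↑(Finset.range n) (fun i => {f i}), ?_, ?_, ?_⟩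
    · intro g hg
      have hgf : pre g n = pre f n := by
        apply Lgen.ext'
        funext m
        rw [pre_toFun, pre_toFun]
        by_cases hm : m < n
        · rw [if_pos hm, if_pos hm, hg m (by simpa using hm)]
        · rw [if_neg hm, if_neg hm]
      have : pre f n ≤ embed g := hgf ▸ pre_le_embed g n
      exact hup this hpU
    · exact isOpen_set_pi (Finset.range n).finite_toSet (fun i _ => isOpen_discrete _)
    · intro i _; rfl
  haveI hT2 : T2Space {x : L2 | x ∉ Set.range (Lgen.ofList : List Bool → L2)} := by
    constructor
    rintro ⟨x, hx⟩ ⟨y, hy⟩ hne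
    have hxy : x ≠ y := fun h => hne (Subtype.ext h)
    have : ∃ k, x.toFun k ≠ y.toFun k := by
      by_contra h
      push_neg at h
      exact hxy (Lgen.ext' (funext h))
    obtain ⟨k, hk⟩ := this
    obtain ⟨bx, hbx⟩ := Option.ne_none_iff_exists'.mp (mem_infinite_iff.mp hx k)
    obtain ⟨by', hby⟩ := Option.ne_none_iff_exists'.mp (mem_infinite_iff.mp hy k)
    refine ⟨Subtype.val ⁻¹' {z : L2 | z.toFun k = some bx},
      Subtype.val ⁻¹' {z : L2 | z.toFun k = some by'},
      (scott_basic_open k bx).preimage continuous_subtype_val,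
      (scott_basic_open k by').preimage continuous_subtype_val,
      hbx, hby, ?_⟩
    rw [Set.disjoint_iff_forall_ne]
    rintro ⟨z, hz⟩ hz1 ⟨w, hw⟩ hw1 h
    have hzw : z = w := congrArg Subtype.val h
    simp only [Set.mem_preimage, Set.mem_setOf_eq] at hz1 hw1
    apply hk
    rw [hbx, hby, ← hz1, ← hw1, hzw]
  exact ⟨hcont.homeoOfEquivCompactToT2⟩
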